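/- Let E_n, F be measurable subsets of ℝ², all contained in a fixed ball B(0,R), with |E_n Δ F| → 0. Suppose there exist constants C > 0 and r₀ > 0, independent of n, such that for all n, all r < r₀ and all x ∈ ∂E_n (the topological boundary), |B(x,r) ∩ E_n| ≥ C |B(x,r)| and |B(x,r) \ E_n| ≥ C |B(x,r)|; and likewise for F. Then sup_{x ∈ E_n} d(x, F) → 0; in particular if the density estimates hold symmetrically, d_H(E_n, F) → 0 for the Hausdorff distance between suitable representatives. -/
import Mathlib

open MeasureTheory Metric

noncomputable section

abbrev E2 := EuclideanSpace ℝ (Fin 2)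

/-- The uniform interior/exterior density estimates for a set at all its boundary points. -/
def DensityEstimates (E : Set E2) (C r₀ : ℝ) : Prop :=
  ∀ r : ℝ, 0 < r → r < r₀ → ∀ x ∈ frontier E,
    ENNReal.ofReal C * volume (ball x r) ≤ volume (ball x r ∩ E) ∧
    ENNReal.ofReal C * volume (ball x r) ≤ volume (ball x r \ E)

/-- A preconnected set meeting both a set and its complement meets the frontier. -/
lemma aux_frontier_cross {s A : Set E2} (hs : IsPreconnected s)
    (h1 : (s ∩ A).Nonempty) (h2 : (s \ A).Nonempty) : (s ∩ frontier A).Nonempty := by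
  by_contra h
  rw [Set.not_nonempty_iff_eq_empty] at h
  have hsub : s ⊆ interior A ∪ (closure A)ᶜ := by
    intro z hz
    have hzf : z ∉ frontier A := fun hzf => (Set.eq_empty_iff_forall_notMem.1 h z) ⟨hz, hzf⟩
    rcases Classical.em (z ∈ closure A) with hc | hc
    · left
      by_contra hi
      exact hzf ⟨hc, hi⟩
    · right; exact hc
  obtain ⟨x, hxs, hxA⟩ := h1
  obtain ⟨y, hys, hyA⟩ := h2
  have hx' : x ∈ s ∩ interior A := by
    refine ⟨hxs, ?_⟩
    rcases hsub hxs with hi | hc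
    · exact hi
    · exact absurd (subset_closure hxA) hc
  have hy' : y ∈ s ∩ (closure A)ᶜ := by
    refine ⟨hys, ?_⟩
    rcases hsub hys with hi | hc
    · exact absurd (interior_subset hi) hyA
    · exact hc
  obtain ⟨z, _, hz1, hz2⟩ := hs (interior A) (closure A)ᶜ isOpen_interior
    isClosed_closure.isOpen_compl hsub ⟨x, hx'⟩ ⟨y, hy'⟩
  exact hz2 (subset_closure (interior_subset hz1))

/-- Key quantitative lemma: if a point of `A` is at distance `≥ ε` from `B`, then
`A \ B` has measure bounded below. -/
lemma aux_key {A B : Set E2} {C r₀ : ℝ} (hC : 0 < C) (hr₀ : 0 < r₀)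
    (hdens : DensityEstimates A C r₀) {ε : ℝ} (hε : 0 < ε)
    {x : E2} (hx : x ∈ A) (hxB : ε ≤ infDist x B) :
    ENNReal.ofReal (min C 1) * volume (ball (0:E2) (min (ε/2) (r₀/2))) ≤ volume (A \ B) := by
  set r : ℝ := min (ε/2) (r₀/2) with hr_def
  have hr : 0 < r := lt_min (by linarith) (by linarith)
  have hrr₀ : r < r₀ := lt_of_le_of_lt (min_le_right _ _) (by linarith)
  have h2r : 2 * r ≤ ε := by
    have := min_le_left (ε/2) (r₀/2); linarith
  -- ball x ε is disjoint from B
  have hdisj : ∀ w, w ∈ ball x ε → w ∉ B := by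
    intro w hw hwB
    have h1 : infDist x B ≤ dist x w := infDist_le_dist_of_mem hwB
    rw [mem_ball, dist_comm] at hw
    linarith
  rcases Classical.em (ball x r ⊆ A) with hball | hball
  · -- ball x r ⊆ A \ B
    have hsub : ball x r ⊆ A \ B := by
      intro w hw
      refine ⟨hball hw, hdisj w ?_⟩
      exact ball_subset_ball (by linarith) hw
    calc ENNReal.ofReal (min C 1) * volume (ball (0:E2) r)
        ≤ 1 * volume (ball (0:E2) r) := by
          gcongr
          exact ENNReal.ofReal_le_one.2 (min_le_right _ _)
      _ = volume (ball x r) := by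
          rw [one_mul]; exact (Measure.addHaar_ball_center volume x r).symm
      _ ≤ volume (A \ B) := measure_mono hsub
  · -- there is a frontier point z of A in ball x r
    rw [Set.not_subset] at hball
    obtain ⟨y, hy, hyA⟩ := hball
    have hseg : segment ℝ x y ⊆ ball x r :=
      (convex_ball x r).segment_subset (mem_ball_self hr) hy
    obtain ⟨z, hzseg, hzf⟩ := aux_frontier_cross (convex_segment x y).isPreconnected
      ⟨x, left_mem_segment ℝ x y, hx⟩ ⟨y, right_mem_segment ℝ x y, hyA⟩
    have hz : z ∈ ball x r := hseg hzseg
    have hdz := (hdens r hr hrr₀ z hzf).1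
    have hsub : ball z r ∩ A ⊆ A \ B := by
      rintro w ⟨hw1, hw2⟩
      refine ⟨hw2, hdisj w ?_⟩
      rw [mem_ball] at hw1 hz ⊢
      calc dist w x ≤ dist w z + dist z x := dist_triangle _ _ _
        _ < r + r := by linarith
        _ ≤ ε := by linarith
    calc ENNReal.ofReal (min C 1) * volume (ball (0:E2) r)
        ≤ ENNReal.ofReal C * volume (ball z r) := by
          rw [show volume (ball z r) = volume (ball (0:E2) r) from
            Measure.addHaar_ball_center volume z r]
          gcongr
          exact min_le_left _ _
      _ ≤ volume (ball z r ∩ A) := hdz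
      _ ≤ volume (A \ B) := measure_mono hsub

/-- L¹ convergence plus uniform density estimates imply Hausdorff convergence. -/
theorem hausdorff_convergence_of_L1_and_density (R : ℝ) (hR : 0 < R)
    (E : ℕ → Set E2) (F : Set E2)
    (hEmeas : ∀ n, MeasurableSet (E n)) (hFmeas : MeasurableSet F)
    (hEbd : ∀ n, E n ⊆ closedBall 0 R) (hFbd : F ⊆ closedBall 0 R)
    (hL1 : Filter.Tendsto (fun n => volume (symmDiff (E n) F)) Filter.atTop (nhds 0))
    (C r₀ : ℝ) (hC : 0 < C) (hr₀ : 0 < r₀)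
    (hdensE : ∀ n, DensityEstimates (E n) C r₀) (hdensF : DensityEstimates F C r₀) :
    Filter.Tendsto (fun n => ⨆ x ∈ E n, infDist x F) Filter.atTop (nhds 0) ∧
    Filter.Tendsto (fun n => hausdorffDist (E n) F) Filter.atTop (nhds 0) := by
  -- main quantitative eventual statement
  have main : ∀ ε : ℝ, 0 < ε → ∀ᶠ n in Filter.atTop,
      (∀ x ∈ E n, infDist x F ≤ ε) ∧ (∀ x ∈ F, infDist x (E n) ≤ ε) := by
    intro ε hε
    set δ : ENNReal := ENNReal.ofReal (min C 1) * volume (ball (0:E2) (min (ε/2) (r₀/2)))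
      with hδ_def
    have hδ : 0 < δ := by
      apply ENNReal.mul_pos
      · simp only [ne_eq, ENNReal.ofReal_eq_zero, not_le]
        exact lt_min hC one_pos
      · exact (measure_ball_pos volume _ (lt_min (by linarith) (by linarith))).ne'
    have hev : ∀ᶠ n in Filter.atTop, volume (symmDiff (E n) F) < δ :=
      hL1.eventually_lt_const hδ
    filter_upwards [hev] with n hn
    constructor
    · intro x hx
      by_contra hlt
      push_neg at hlt
      have hkey := aux_key hC hr₀ (hdensE n) hε hx hlt.le
      have hsub : E n \ F ⊆ symmDiff (E n) F := by
        rw [Set.symmDiff_def]; exact Set.subset_union_left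
      exact absurd (hkey.trans (measure_mono hsub)) (not_le.2 hn)
    · intro x hx
      by_contra hlt
      push_neg at hlt
      have hkey := aux_key hC hr₀ hdensF hε hx hlt.le
      have hsub : F \ E n ⊆ symmDiff (E n) F := by
        rw [Set.symmDiff_def]; exact Set.subset_union_right
      exact absurd (hkey.trans (measure_mono hsub)) (not_le.2 hn)
  constructor
  · rw [Metric.tendsto_atTop]
    intro ε hε
    obtain ⟨N, hN⟩ := Filter.eventually_atTop.1 (main (ε/2) (by linarith))
    refine ⟨N, fun n hn => ?_⟩
    have h1 := (hN n hn).1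
    have hnonneg : (0:ℝ) ≤ ⨆ x ∈ E n, infDist x F :=
      Real.iSup_nonneg fun x => Real.iSup_nonneg fun _ => infDist_nonneg
    have hle : (⨆ x ∈ E n, infDist x F) ≤ ε/2 :=
      Real.iSup_le (fun x => Real.iSup_le (fun hx => h1 x hx) (by linarith)) (by linarith)
    rw [Real.dist_eq, sub_zero, abs_of_nonneg hnonneg]
    linarith
  · rw [Metric.tendsto_atTop]
    intro ε hε
    obtain ⟨N, hN⟩ := Filter.eventually_atTop.1 (main (ε/2) (by linarith))
    refine ⟨N, fun n hn => ?_⟩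
    have hle : hausdorffDist (E n) F ≤ ε/2 :=
      hausdorffDist_le_of_infDist (by linarith) (hN n hn).1 (hN n hn).2
    rw [Real.dist_eq, sub_zero, abs_of_nonneg hausdorffDist_nonneg]
    linarith

end
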